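/- Let u and v be distinct CNPs with no null positions and let w = u − v, with the convention w_0 = w_{n+1} = 0. Let F_w denote the partition of [0, n+1] into maximal flat intervals of w (maximal intervals on which w is constant). Then for any unit-cost function f, dist_f(u,v) ≥ ⌈(|F_w| − 1)/2⌉. -/

import Mathlib

open scoped ENat

/-- A copy-number profile of dimension `n`: positions are `Fin n` (position `i+1` in 1-based terms),
values are non-negative integers. -/
abbrev CNP (n : ℕ) := Fin n → ℕ

/-- An event `(s, t, δ)`: affects 1-based positions in `[s, t]`, changing copy numbers by `δ`. -/
abbrev Event := ℕ × ℕ × ℤ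

/-- A valid event has `1 ≤ s ≤ t ≤ n` and `δ ≠ 0`. -/
def ValidEvent (n : ℕ) (e : Event) : Prop :=
  1 ≤ e.1 ∧ e.1 ≤ e.2.1 ∧ e.2.1 ≤ n ∧ e.2.2 ≠ 0

/-- Applying event `e = (s,t,δ)` to `u` : each 1-based position `i ∈ [s,t]` with `u_i > 0`
becomes `max(u_i + δ, 0)`; other positions are unchanged. -/
def applyEvent {n : ℕ} (u : CNP n) (e : Event) : CNP n :=
  fun i => if e.1 ≤ (i : ℕ) + 1 ∧ (i : ℕ) + 1 ≤ e.2.1 ∧ 0 < u i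
    then ((u i : ℤ) + e.2.2).toNat else u i

/-- Applying a sequence of events in order. -/
def applySeq {n : ℕ} (u : CNP n) (E : List Event) : CNP n :=
  E.foldl applyEvent u

/-- Cost of applying event `e` on `u` w.r.t. cost function `f`:
the maximum of `f (u_i) δ` over affected positions `i ∈ [s,t]`. -/
noncomputable def eventCost {n : ℕ} (f : ℕ → ℤ → ℕ∞) (u : CNP n) (e : Event) : ℕ∞ :=
  (Finset.univ.filter (fun i : Fin n => e.1 ≤ (i : ℕ) + 1 ∧ (i : ℕ) + 1 ≤ e.2.1)).sup
    (fun i => f (u i) e.2.2)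

/-- Total cost of applying a sequence of events, costs evaluated on successive profiles. -/
noncomputable def seqCost {n : ℕ} (f : ℕ → ℤ → ℕ∞) : CNP n → List Event → ℕ∞
  | _, [] => 0
  | u, e :: E => eventCost f u e + seqCost f (applyEvent u e) E

/-- `dist_f(u,v)`: minimum total cost of a sequence of valid events transforming `u` into `v`
(`⊤` if no such sequence exists). -/
noncomputable def distf {n : ℕ} (f : ℕ → ℤ → ℕ∞) (u v : CNP n) : ℕ∞ :=
  sInf { c | ∃ E : List Event, (∀ e ∈ E, ValidEvent n e) ∧ applySeq u E = v ∧ seqCost f u E = c }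

/-- A unit-cost function takes only values `1` and `∞`. -/
def UnitCost (f : ℕ → ℤ → ℕ∞) : Prop := ∀ c δ, f c δ = 1 ∨ f c δ = ⊤

/-- The most permissive cost function: every event costs `1`. -/
def anyCost : ℕ → ℤ → ℕ∞ := fun _ _ => 1

/-- `dist_any(u,v)`: minimum number of events transforming `u` into `v`. -/
noncomputable def distAny {n : ℕ} (u v : CNP n) : ℕ∞ := distf anyCost u v

/-- The difference vector `w = u - v` in 1-based indexing, extended by `w_0 = w_{n+1} = 0`. -/
def diffExt {n : ℕ} (u v : CNP n) (i : ℕ) : ℤ :=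
  if h : 1 ≤ i ∧ i ≤ n then (u ⟨i - 1, by omega⟩ : ℤ) - (v ⟨i - 1, by omega⟩ : ℤ) else 0

/-- `[a,b] ⊆ [0, n+1]` is a flat interval of `w` if `w` is constant on it. -/
def IsFlat (n : ℕ) (w : ℕ → ℤ) (a b : ℕ) : Prop :=
  a ≤ b ∧ b ≤ n + 1 ∧ ∀ i j, a ≤ i → i ≤ b → a ≤ j → j ≤ b → w i = w j

/-- A maximal flat interval: flat, and not properly contained in a flat interval. -/
def IsMaxFlat (n : ℕ) (w : ℕ → ℤ) (a b : ℕ) : Prop :=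
  IsFlat n w a b ∧ ∀ a' b', a' ≤ a → b ≤ b' → IsFlat n w a' b' → a' = a ∧ b' = b

/-- `|F_w|`: the number of maximal flat intervals of `w` over `[0, n+1]`. -/
noncomputable def numFlat (n : ℕ) (w : ℕ → ℤ) : ℕ :=
  Nat.card {p : ℕ × ℕ // IsMaxFlat n w p.1 p.2}


/-! ### Auxiliary machinery for the lower bound -/

/-- The set of breakpoints of `w`: positions `i ∈ [0,n]` with `w i ≠ w (i+1)`. -/
def bkSet (n : ℕ) (w : ℕ → ℤ) : Finset ℕ :=
  (Finset.range (n+1)).filter (fun i => w i ≠ w (i+1))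

lemma numFlat_le_bk (n : ℕ) (w : ℕ → ℤ) : numFlat n w ≤ (bkSet n w).card + 1 := by
  set T : Finset ℕ := insert (n+1) (bkSet n w) with hTdef
  have key : ∀ p : {p : ℕ × ℕ // IsMaxFlat n w p.1 p.2}, p.1.2 ∈ T := by
    rintro ⟨⟨a, b⟩, hflat, hmax⟩
    dsimp only at hflat hmax ⊢
    by_cases hb : b = n + 1
    · rw [hTdef, hb]; exact Finset.mem_insert_self _ _
    · have hbn : b ≤ n := by have := hflat.2.1; omega
      have hne : w b ≠ w (b+1) := by
        intro heq
        have hflat' : IsFlat n w a (b+1) := by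
          refine ⟨by have := hflat.1; omega, by omega, ?_⟩
          have hcon : ∀ i, a ≤ i → i ≤ b + 1 → w i = w a := by
            intro i hai hib
            rcases Nat.lt_or_ge i (b+1) with h | h
            · exact hflat.2.2 i a hai (by omega) le_rfl hflat.1
            · have : i = b + 1 := by omega
              subst this
              rw [← heq]
              exact hflat.2.2 b a hflat.1 le_rfl le_rfl hflat.1
          intro i j hai hib haj hjb
          rw [hcon i hai hib, hcon j haj hjb]
        have := (hmax a (b+1) le_rfl (by omega) hflat').2
        omega
      rw [hTdef]
      refine Finset.mem_insert_of_mem ?_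
      simp only [bkSet, Finset.mem_filter, Finset.mem_range]
      exact ⟨by omega, hne⟩
  have hinj : Function.Injective
      (fun p : {p : ℕ × ℕ // IsMaxFlat n w p.1 p.2} => (⟨p.1.2, key p⟩ : {i // i ∈ T})) := by
    rintro ⟨⟨a, b⟩, hp⟩ ⟨⟨a', b'⟩, hq⟩ h
    simp only [Subtype.mk.injEq] at h
    subst h
    rcases le_total a a' with hle | hle
    · obtain ⟨h1, _⟩ := hq.2 a b hle le_rfl hp.1
      simp [h1]
    · obtain ⟨h1, _⟩ := hp.2 a' b hle le_rfl hq.1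
      simp [h1]
  calc numFlat n w ≤ Nat.card {i // i ∈ T} := Nat.card_le_card_of_injective _ hinj
    _ = T.card := Nat.card_eq_finsetCard T
    _ ≤ (bkSet n w).card + 1 := by
        simpa using Finset.card_insert_le (n+1) (bkSet n w)

lemma zeros_persist {n : ℕ} (E : List Event) :
    ∀ (u : CNP n) (i : Fin n), u i = 0 → applySeq u E i = 0 := by
  induction E with
  | nil => intro u i h; simpa [applySeq] using h
  | cons e E ih =>
    intro u i h
    have h' : applyEvent u e i = 0 := by
      simp [applyEvent, h]
    simpa [applySeq] using ih (applyEvent u e) i h'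

/-- If `u'` (the result of a valid event on `u`) is everywhere positive, then `w' = u' - v`
is `w + δ` on `[s,t]` and `w` elsewhere. -/
lemma diff_shift {n : ℕ} (u v : CNP n) (e : Event) (he : ValidEvent n e)
    (h' : ∀ i, 0 < applyEvent u e i) :
    (∀ i : ℕ, e.1 ≤ i → i ≤ e.2.1 → diffExt (applyEvent u e) v i = diffExt u v i + e.2.2)
    ∧ (∀ i : ℕ, ¬(e.1 ≤ i ∧ i ≤ e.2.1) → diffExt (applyEvent u e) v i = diffExt u v i) := by
  obtain ⟨hs1, hst, htn, hd⟩ := he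
  constructor
  · intro i hsi hit
    have hi : 1 ≤ i ∧ i ≤ n := ⟨by omega, by omega⟩
    have hj : i - 1 < n := by omega
    set j : Fin n := ⟨i - 1, hj⟩ with hjdef
    have hcond : e.1 ≤ (j : ℕ) + 1 ∧ (j : ℕ) + 1 ≤ e.2.1 := by
      simp only [hjdef]; omega
    have hupos : 0 < u j := by
      by_contra h0
      have hu0 : u j = 0 := by omega
      have := h' j
      rw [applyEvent] at this
      simp [hu0] at this
    have huj : applyEvent u e j = ((u j : ℤ) + e.2.2).toNat := by
      rw [applyEvent]
      simp [hcond.1, hcond.2, hupos]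
    have hpos' : 0 < applyEvent u e j := h' j
    have hcast : (applyEvent u e j : ℤ) = (u j : ℤ) + e.2.2 := by
      rw [huj] at hpos' ⊢
      have : 0 < (u j : ℤ) + e.2.2 := by
        by_contra hc
        push_neg at hc
        have : ((u j : ℤ) + e.2.2).toNat = 0 := Int.toNat_of_nonpos hc
        omega
      rw [Int.toNat_of_nonneg (le_of_lt this)]
    rw [diffExt, diffExt, dif_pos hi, dif_pos hi]
    show (applyEvent u e j : ℤ) - (v j : ℤ) = (u j : ℤ) - (v j : ℤ) + e.2.2
    rw [hcast]; ring
  · intro i hni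
    by_cases hi : 1 ≤ i ∧ i ≤ n
    · have hj : i - 1 < n := by omega
      set j : Fin n := ⟨i - 1, hj⟩ with hjdef
      have hcond : ¬(e.1 ≤ (j : ℕ) + 1 ∧ (j : ℕ) + 1 ≤ e.2.1 ∧ 0 < u j) := by
        simp only [hjdef]
        intro ⟨h1, h2, _⟩
        exact hni ⟨by omega, by omega⟩
      have huj : applyEvent u e j = u j := by
        rw [applyEvent, if_neg hcond]
      rw [diffExt, diffExt, dif_pos hi, dif_pos hi]
      show (applyEvent u e j : ℤ) - (v j : ℤ) = (u j : ℤ) - (v j : ℤ)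
      rw [huj]
    · rw [diffExt, diffExt, dif_neg hi, dif_neg hi]

lemma bk_step {n : ℕ} (u v : CNP n) (e : Event) (he : ValidEvent n e)
    (h' : ∀ i, 0 < applyEvent u e i) :
    (bkSet n (diffExt u v)).card ≤ (bkSet n (diffExt (applyEvent u e) v)).card + 2 := by
  obtain ⟨hA, hB⟩ := diff_shift u v e he h'
  obtain ⟨hs1, hst, htn, hd⟩ := he
  set w := diffExt u v
  set w' := diffExt (applyEvent u e) v
  have hsub : bkSet n w ⊆ insert (e.1 - 1) (insert e.2.1 (bkSet n w')) := by
    intro i hi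
    simp only [bkSet, Finset.mem_filter, Finset.mem_range] at hi
    obtain ⟨hin, hne⟩ := hi
    simp only [Finset.mem_insert, bkSet, Finset.mem_filter, Finset.mem_range]
    by_cases h1 : i = e.1 - 1
    · exact Or.inl h1
    by_cases h2 : i = e.2.1
    · exact Or.inr (Or.inl h2)
    refine Or.inr (Or.inr ⟨hin, ?_⟩)
    by_cases hmid : e.1 ≤ i ∧ i ≤ e.2.1
    · have hii : i ≤ e.2.1 - 1 := by omega
      rw [hA i hmid.1 hmid.2, hA (i+1) (by omega) (by omega)]
      intro hc
      exact hne (by omega)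
    · rw [hB i hmid]
      rcases Nat.lt_or_ge i e.1 with hlt | hge
      · rw [hB (i+1) (by omega)]
        exact hne
      · have : e.2.1 < i := by omega
        rw [hB (i+1) (by omega)]
        exact hne
  calc (bkSet n w).card ≤ (insert (e.1 - 1) (insert e.2.1 (bkSet n w'))).card :=
        Finset.card_le_card hsub
    _ ≤ (insert e.2.1 (bkSet n w')).card + 1 := Finset.card_insert_le _ _
    _ ≤ (bkSet n w').card + 1 + 1 := by
        have := Finset.card_insert_le e.2.1 (bkSet n w')
        omega
    _ = (bkSet n w').card + 2 := by omega

lemma bk_le {n : ℕ} (v : CNP n) (hv : ∀ i, 0 < v i) :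
    ∀ (E : List Event) (u : CNP n), (∀ e ∈ E, ValidEvent n e) → applySeq u E = v →
      (bkSet n (diffExt u v)).card ≤ 2 * E.length := by
  intro E
  induction E with
  | nil =>
    intro u _ happ
    have hu : u = v := by simpa [applySeq] using happ
    subst hu
    have : bkSet n (diffExt u u) = ∅ := by
      apply Finset.filter_false_of_mem
      intro i _
      simp only [diffExt, ne_eq, not_not]
      split_ifs <;> simp
    simp [this]
  | cons e E ih =>
    intro u hval happ
    have he : ValidEvent n e := hval e List.mem_cons_self
    have happ' : applySeq (applyEvent u e) E = v := by simpa [applySeq] using happ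
    have h' : ∀ i, 0 < applyEvent u e i := by
      intro i
      by_contra h0
      have h0' : applyEvent u e i = 0 := by omega
      have := zeros_persist E (applyEvent u e) i h0'
      rw [happ'] at this
      exact absurd this (by have := hv i; omega)
    have h1 := bk_step u v e he h'
    have h2 := ih (applyEvent u e) (fun e' he' => hval e' (List.mem_cons_of_mem e he')) happ'
    simp only [List.length_cons]
    omega

lemma len_le_seqCost {n : ℕ} (f : ℕ → ℤ → ℕ∞) (hf : UnitCost f) :
    ∀ (E : List Event) (u : CNP n), (∀ e ∈ E, ValidEvent n e) →
      (E.length : ℕ∞) ≤ seqCost f u E := by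
  intro E
  induction E with
  | nil => intro u _; simp [seqCost]
  | cons e E ih =>
    intro u hval
    have he : ValidEvent n e := hval e List.mem_cons_self
    obtain ⟨hs1, hst, htn, hd⟩ := he
    have hn : e.1 - 1 < n := by omega
    have hone : (1 : ℕ∞) ≤ eventCost f u e := by
      have hmem : (⟨e.1 - 1, hn⟩ : Fin n) ∈
          Finset.univ.filter (fun i : Fin n => e.1 ≤ (i : ℕ) + 1 ∧ (i : ℕ) + 1 ≤ e.2.1) := by
        simp only [Finset.mem_filter, Finset.mem_univ, true_and]
        omega
      have hle : f (u ⟨e.1 - 1, hn⟩) e.2.2 ≤ eventCost f u e :=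
        Finset.le_sup (f := fun i : Fin n => f (u i) e.2.2) hmem
      rcases hf (u ⟨e.1 - 1, hn⟩) e.2.2 with h | h
      · rw [h] at hle; exact hle
      · rw [h] at hle; exact le_trans le_top hle
    have hrest : (E.length : ℕ∞) ≤ seqCost f (applyEvent u e) E :=
      ih (applyEvent u e) (fun e' he' => hval e' (List.mem_cons_of_mem e he'))
    calc ((e :: E).length : ℕ∞) = 1 + (E.length : ℕ∞) := by
          simp [List.length_cons, add_comm]
      _ ≤ eventCost f u e + seqCost f (applyEvent u e) E := add_le_add hone hrest
      _ = seqCost f u (e :: E) := rfl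

/-- for distinct CNPs `u ≠ v` with no null positions, and any unit-cost `f`,
`dist_f(u,v) ≥ ⌈(|F_w| - 1)/2⌉`, where `F_w` is the set of maximal flat intervals of
`w = u - v` (extended by `w_0 = w_{n+1} = 0`). -/
theorem stmt5 {n : ℕ} (u v : CNP n) (huv : u ≠ v)
    (hu : ∀ i, 0 < u i) (hv : ∀ i, 0 < v i)
    (f : ℕ → ℤ → ℕ∞) (hf : UnitCost f) :
    (((numFlat n (diffExt u v) - 1 + 1) / 2 : ℕ) : ℕ∞) ≤ distf f u v := by
  apply le_sInf
  rintro c ⟨E, hval, happ, hcost⟩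
  have hB := bk_le v hv E u hval happ
  have hN := numFlat_le_bk n (diffExt u v)
  have hlen : (numFlat n (diffExt u v) - 1 + 1) / 2 ≤ E.length := by omega
  calc (((numFlat n (diffExt u v) - 1 + 1) / 2 : ℕ) : ℕ∞) ≤ (E.length : ℕ∞) :=
        Nat.cast_le.mpr hlen
    _ ≤ seqCost f u E := len_le_seqCost f hf E u hval
    _ = c := hcost
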